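/- Let R > 0 and let f : [R,∞) → ℝ be a C¹ function with ∫_R^∞ |f'(r)|² r³ dr < ∞ and lim_{r→∞} f(r) = 0. Define π_R f(r) = R²·f(R)/r² and π_R^⊥ f(r) = f(r) − R²·f(R)/r² for r ≥ R. Then ∫_R^∞ (d/dr)(π_R^⊥f)(r) · (d/dr)(r^{-2}) · r³ dr = 0; consequently ∫_R^∞ |f'(r)|² r³ dr = ∫_R^∞ |(π_R^⊥f)'(r)|² r³ dr + ∫_R^∞ |(π_R f)'(r)|² r³ dr. -/

import Mathlib

open MeasureTheory Filter Set

/-- the explicit formula `π_R f(r) = R²f(R)/r²` realizes the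
`Ḣ¹((R,∞))`-orthogonal projection onto the span of `1/r²`: the complementary part
`π_R^⊥ f` is `Ḣ¹`-orthogonal to `1/r²`, and the exterior `Ḣ¹`-energy decomposes. -/
theorem stmt3 (R : ℝ) (hR : 0 < R) (f : ℝ → ℝ)
    (hf : ContDiffOn ℝ 1 f (Ici R))
    (hint : IntegrableOn (fun r => (deriv f r) ^ 2 * r ^ 3) (Ioi R))
    (hlim : Tendsto f atTop (nhds 0)) :
    (∫ r in Ioi R,
        deriv (fun ρ => f ρ - R ^ 2 * f R / ρ ^ 2) r * deriv (fun ρ : ℝ => (ρ ^ 2)⁻¹) r * r ^ 3)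
      = 0 ∧
    (∫ r in Ioi R, (deriv f r) ^ 2 * r ^ 3)
      = (∫ r in Ioi R, (deriv (fun ρ => f ρ - R ^ 2 * f R / ρ ^ 2) r) ^ 2 * r ^ 3)
        + ∫ r in Ioi R, (deriv (fun ρ => R ^ 2 * f R / ρ ^ 2) r) ^ 2 * r ^ 3 := by
  set c : ℝ := R ^ 2 * f R with hc
  -- derivative of (ρ²)⁻¹
  have h1 : ∀ r : ℝ, 0 < r → HasDerivAt (fun ρ : ℝ => (ρ ^ 2)⁻¹) (-2 * (r ^ 3)⁻¹) r := by
    intro r hr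
    have hr2 : (r : ℝ) ^ 2 ≠ 0 := by positivity
    have := (hasDerivAt_pow 2 r).inv hr2
    refine this.congr_deriv ?_
    field_simp
    ring
  have hd2 : ∀ r ∈ Ioi R, deriv (fun ρ : ℝ => (ρ ^ 2)⁻¹) r = -2 * (r ^ 3)⁻¹ :=
    fun r hr => (h1 r (hR.trans hr)).deriv
  -- derivative of f at interior points
  have hfd : ∀ r ∈ Ioi R, HasDerivAt f (deriv f r) r := by
    intro r hr
    exact ((hf.contDiffAt (Ici_mem_nhds hr)).differentiableAt one_ne_zero).hasDerivAt
  -- derivative of c/ρ²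
  have hpi : ∀ r ∈ Ioi R, HasDerivAt (fun ρ : ℝ => c / ρ ^ 2) (-2 * c * (r ^ 3)⁻¹) r := by
    intro r hr
    have := (h1 r (hR.trans hr)).const_mul c
    simp only [div_eq_mul_inv]
    refine this.congr_deriv ?_
    ring
  have hdpi : ∀ r ∈ Ioi R, deriv (fun ρ : ℝ => c / ρ ^ 2) r = -2 * c * (r ^ 3)⁻¹ :=
    fun r hr => (hpi r hr).deriv
  have hdperp : ∀ r ∈ Ioi R,
      deriv (fun ρ => f ρ - c / ρ ^ 2) r = deriv f r + 2 * c * (r ^ 3)⁻¹ := by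
    intro r hr
    have := (hfd r hr).sub (hpi r hr)
    rw [show (fun ρ => f ρ - c / ρ ^ 2) = (f - fun ρ => c / ρ ^ 2) from rfl, this.deriv]
    ring
  -- integrability of (r³)⁻¹
  have I1 : IntegrableOn (fun r : ℝ => (r ^ 3)⁻¹) (Ioi R) := by
    have := integrableOn_Ioi_rpow_of_lt (show (-3 : ℝ) < -1 by norm_num) hR
    apply this.congr_fun _ measurableSet_Ioi
    intro r hr
    have hr0 : (0 : ℝ) < r := hR.trans hr
    show r ^ (-3 : ℝ) = (r ^ 3)⁻¹
    rw [Real.rpow_neg hr0.le, show (3 : ℝ) = ((3 : ℕ) : ℝ) by norm_num, Real.rpow_natCast]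
  -- integrability of deriv f
  have I2 : IntegrableOn (deriv f) (Ioi R) := by
    apply (hint.add I1).mono' (measurable_deriv f).aestronglyMeasurable
    rw [ae_restrict_iff' measurableSet_Ioi]
    filter_upwards with r hr
    have hr0 : (0 : ℝ) < r := hR.trans hr
    have ht : (0 : ℝ) < r ^ 3 := by positivity
    simp only [Pi.add_apply]
    rw [Real.norm_eq_abs]
    have hrw : (deriv f r) ^ 2 * r ^ 3 + (r ^ 3)⁻¹
        = ((deriv f r) ^ 2 * (r ^ 3) ^ 2 + 1) / r ^ 3 := by field_simp
    rw [hrw, le_div_iff₀ ht]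
    nlinarith [sq_nonneg (|deriv f r| * r ^ 3 - 1), abs_nonneg (deriv f r),
      sq_abs (deriv f r), mul_nonneg (abs_nonneg (deriv f r)) ht.le]
  -- FTC values
  have JA : ∫ r in Ioi R, deriv f r = 0 - f R := by
    exact integral_Ioi_of_hasDerivAt_of_tendsto
      (hf.continuousOn.continuousWithinAt self_mem_Ici) hfd I2 hlim
  have JB : ∫ r in Ioi R, (r ^ 3)⁻¹ = (R ^ 2)⁻¹ / 2 := by
    have h := integral_Ioi_rpow_of_lt (show (-3 : ℝ) < -1 by norm_num) hR
    have heq : ∫ r in Ioi R, (r ^ 3)⁻¹ = ∫ r in Ioi R, r ^ (-3 : ℝ) := by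
      apply setIntegral_congr_fun measurableSet_Ioi
      intro r hr
      have hr0 : (0 : ℝ) < r := hR.trans hr
      show (r ^ 3)⁻¹ = r ^ (-3 : ℝ)
      rw [Real.rpow_neg hr0.le, show (3 : ℝ) = ((3 : ℕ) : ℝ) by norm_num, Real.rpow_natCast]
    rw [heq, h]
    rw [show (-3 : ℝ) + 1 = -2 by norm_num, Real.rpow_neg hR.le,
      show (2 : ℝ) = ((2 : ℕ) : ℝ) by norm_num, Real.rpow_natCast]
    field_simp
  -- the orthogonality integral
  have E1 : (∫ r in Ioi R,
      deriv (fun ρ => f ρ - c / ρ ^ 2) r * deriv (fun ρ : ℝ => (ρ ^ 2)⁻¹) r * r ^ 3)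
      = ∫ r in Ioi R, ((-2) * deriv f r + (-(4 * c)) * (r ^ 3)⁻¹) := by
    apply setIntegral_congr_fun measurableSet_Ioi
    intro r hr
    have hr0 : (0 : ℝ) < r := hR.trans hr
    dsimp only
    rw [hdperp r hr, hd2 r hr]
    field_simp
    ring
  have key : (∫ r in Ioi R,
      deriv (fun ρ => f ρ - c / ρ ^ 2) r * deriv (fun ρ : ℝ => (ρ ^ 2)⁻¹) r * r ^ 3) = 0 := by
    rw [E1, integral_add (I2.const_mul _) (I1.const_mul _), integral_const_mul,
      integral_const_mul, JA, JB, hc]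
    field_simp
    ring
  refine ⟨key, ?_⟩
  -- energy decomposition
  have E2 : (∫ r in Ioi R, (deriv (fun ρ => f ρ - c / ρ ^ 2) r) ^ 2 * r ^ 3)
      = ∫ r in Ioi R, ((deriv f r) ^ 2 * r ^ 3
          + ((4 * c) * deriv f r + (4 * c ^ 2) * (r ^ 3)⁻¹)) := by
    apply setIntegral_congr_fun measurableSet_Ioi
    intro r hr
    have hr0 : (0 : ℝ) < r := hR.trans hr
    dsimp only
    rw [hdperp r hr]
    field_simp
    ring
  have E3 : (∫ r in Ioi R, (deriv (fun ρ : ℝ => c / ρ ^ 2) r) ^ 2 * r ^ 3)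
      = ∫ r in Ioi R, (4 * c ^ 2) * (r ^ 3)⁻¹ := by
    apply setIntegral_congr_fun measurableSet_Ioi
    intro r hr
    have hr0 : (0 : ℝ) < r := hR.trans hr
    dsimp only
    rw [hdpi r hr]
    field_simp
    ring
  have IB : IntegrableOn (fun r : ℝ => 4 * c * deriv f r + 4 * c ^ 2 * (r ^ 3)⁻¹) (Ioi R) :=
    (I2.const_mul (4 * c)).add (I1.const_mul (4 * c ^ 2))
  rw [E2, E3, integral_add hint IB,
    integral_add (I2.const_mul (4 * c)) (I1.const_mul (4 * c ^ 2)), integral_const_mul,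
    integral_const_mul, JA, JB]
  have hzero : 4 * c * (0 - f R) + 4 * c ^ 2 * ((R ^ 2)⁻¹ / 2) + 4 * c ^ 2 * ((R ^ 2)⁻¹ / 2) = 0 := by
    rw [hc]
    field_simp
    ring
  linarith
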